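/- Let 𝒯 = {T_v} be an (n,d)-pre-trianguloid with n ≥ 2 and d ≥ 2. (i) (Contraction) For every j̄ ∈ [d̄], the topes T_v with v_j̄ = 0, viewed as topes between [n] and [d̄]∖{j̄}, form an (n, d−1)-pre-trianguloid. (ii) (Deletion) For every i ∈ [n]: for every lattice point v' of (n−1)Δ^{d−1} there exists a lattice point v of nΔ^{d−1} with RD(T_v|_{[n]∖{i}}) = v'; any two topes of 𝒯 whose restrictions to [n]∖{i} have the same right degree vector have equal restrictions; and the resulting collection {T'_{v'}}, where T'_{v'} is the common restriction with right degree vector v', is an (n−1, d)-pre-trianguloid. -/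
import Mathlib


open Finset

/-- A bipartite graph between `α` and `β`, identified with its edge set. -/
abbrev BGraph (α β : Type*) := Finset (α × β)

section BipartiteDefs

variable {α β : Type*} [DecidableEq α] [DecidableEq β]

/-- Left degree vector. -/
def LD (G : BGraph α β) (a : α) : ℕ := (G.filter fun e => e.1 = a).card

/-- Right degree vector. -/
def RD (G : BGraph α β) (b : β) : ℕ := (G.filter fun e => e.2 = b).card

/-- The simple graph on `α ⊕ β` associated to a bipartite edge set. -/
def toGraph (G : BGraph α β) : SimpleGraph (α ⊕ β) :=
  SimpleGraph.fromRel fun x y => ∃ a b, x = Sum.inl a ∧ y = Sum.inr b ∧ (a, b) ∈ G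

/-- Acyclicity of a bipartite edge set. -/
def Acyclic (G : BGraph α β) : Prop := (toGraph G).IsAcyclic

/-- `U` is a tree on the vertex set `I ⊔ J`. -/
def IsTreeOn (U : BGraph α β) (I : Finset α) (J : Finset β) : Prop :=
  (∀ e ∈ U, e.1 ∈ I ∧ e.2 ∈ J) ∧ Acyclic U ∧
    ∀ x y : α ⊕ β, Sum.elim (· ∈ I) (· ∈ J) x → Sum.elim (· ∈ I) (· ∈ J) y →
      (toGraph U).Reachable x y

/-- `M` is a perfect matching between `I` and `J`. -/
def IsMatching (M : BGraph α β) (I : Finset α) (J : Finset β) : Prop :=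
  (∀ e ∈ M, e.1 ∈ I ∧ e.2 ∈ J) ∧ (∀ a ∈ I, ∃! b : β, (a, b) ∈ M) ∧
    ∀ b ∈ J, ∃! a : α, (a, b) ∈ M

/-- Compatibility of two bipartite graphs. -/
def Compatible (G G' : BGraph α β) : Prop :=
  ∀ (I : Finset α) (J : Finset β) (M M' : BGraph α β),
    M ⊆ G → M' ⊆ G' → IsMatching M I J → IsMatching M' I J → M = M'

end BipartiteDefs

section TopeDefs

variable {n d : ℕ}

/-- The graph of a tope `T : [n] → [d]`. -/
def topeGraph (T : Fin n → Fin d) : BGraph (Fin n) (Fin d) :=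
  Finset.univ.image fun i => (i, T i)

/-- The position (right degree vector) of a tope. -/
def topePos (T : Fin n → Fin d) : Fin d → ℕ :=
  fun j => (Finset.univ.filter fun i => T i = j).card

/-- Standard unit vector `e_j`. -/
def unitVec (j : Fin d) : Fin d → ℕ := fun k => if k = j then 1 else 0

end TopeDefs

set_option linter.unusedSectionVars false
set_option linter.unusedVariables false
set_option maxHeartbeats 1600000

section Package

variable {I : Type*} {K : Type*} [Fintype I] [DecidableEq I] [Fintype K] [DecidableEq K]

theorem packCL (g : I → K → K) (u : K → ℕ)
    (hcard : ∀ t k, (Finset.univ.filter fun i => g i t = k).card = u k + if k = t then 1 else 0)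
    (hfix : ∀ i t k, g i t = k → g i k = k)
    {c t : K} (hct : t ≠ c) {e : I} (he : g e c = c) (hbad : g e t ≠ c)
    {i : I} (hic : g i c = c) (hie : i ≠ e) : g i t = c := by
  have hsub : (Finset.univ.filter fun x => g x t = c) ⊆
      (Finset.univ.filter fun x => g x c = c).erase e := by
    intro x hx
    simp only [Finset.mem_filter, Finset.mem_univ, true_and] at hx
    refine Finset.mem_erase.mpr ⟨?_, ?_⟩
    · rintro rfl; exact hbad hx
    · simp only [Finset.mem_filter, Finset.mem_univ, true_and]
      exact hfix x t c hx
  have hcards : ((Finset.univ.filter fun x => g x c = c).erase e).card ≤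
      (Finset.univ.filter fun x => g x t = c).card := by
    rw [Finset.card_erase_of_mem (by simp [he]), hcard, hcard, if_pos rfl,
      if_neg (Ne.symm hct)]
    omega
  have heq := Finset.eq_of_subset_of_card_le hsub hcards
  have hmem : i ∈ (Finset.univ.filter fun x => g x t = c) := by
    rw [heq]
    exact Finset.mem_erase.mpr ⟨hie, by simp [hic]⟩
  simpa using hmem

theorem packEXC (g : I → K → K) (u : K → ℕ)
    (hcard : ∀ t k, (Finset.univ.filter fun i => g i t = k).card = u k + if k = t then 1 else 0)
    (hfix : ∀ i t k, g i t = k → g i k = k)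
    {c t : K} (hct : t ≠ c) : ∃ e, g e c = c ∧ g e t ≠ c := by
  by_contra hcon
  push_neg at hcon
  have hsub : (Finset.univ.filter fun x => g x c = c) ⊆
      (Finset.univ.filter fun x => g x t = c) := by
    intro x hx
    simp only [Finset.mem_filter, Finset.mem_univ, true_and] at *
    exact hcon x hx
  have hle := Finset.card_le_card hsub
  rw [hcard, hcard, if_pos rfl, if_neg (Ne.symm hct)] at hle
  omega

theorem packML (g : I → K → K) (u : K → ℕ)
    (hcard : ∀ t k, (Finset.univ.filter fun i => g i t = k).card = u k + if k = t then 1 else 0)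
    (hfix : ∀ i t k, g i t = k → g i k = k)
    {i0 i : I} {a b : K} (hab : a ≠ b) (ha : g i0 a = a) (hb : g i0 b = b)
    (hi : i ≠ i0) : g i a = g i b := by
  classical
  by_contra hne
  have hE : ∀ e x y, e ≠ i0 → g e b = x → g e a = y → x ≠ y →
      y ≠ a ∧ y ≠ b ∧ x ≠ a ∧ x ≠ b := by
    intro e x y hei0 hgb hga hxy
    refine ⟨?_, ?_, ?_, ?_⟩
    · intro hya
      rw [hya] at hga
      have hxa : g e b = a := packCL g u hcard hfix (Ne.symm hab) ha
        (by rw [hb]; exact Ne.symm hab) hga hei0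
      exact hxy ((hgb.symm.trans hxa).trans hya.symm)
    · intro hyb
      rw [hyb] at hga
      have h2 : g e b = b := hfix e a b hga
      exact hxy ((hgb.symm.trans h2).trans hyb.symm)
    · intro hxa
      rw [hxa] at hgb
      have h2 : g e a = a := hfix e b a hgb
      exact hxy (hxa.trans (hga.symm.trans h2).symm)
    · intro hxb
      rw [hxb] at hgb
      have h2 : g e a = b := packCL g u hcard hfix hab hb
        (by rw [ha]; exact hab) hgb hei0
      exact hxy (hxb.trans (hga.symm.trans h2).symm)
  have hstep : ∀ e x y, e ≠ i0 → g e b = x → g e a = y → x ≠ y →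
      ∃ e', e' ≠ i0 ∧ g e' b = y ∧ g e' a ≠ y := by
    intro e x y hei0 hgb hga hxy
    obtain ⟨hya, hyb, hxa, hxb⟩ := hE e x y hei0 hgb hga hxy
    obtain ⟨e', he'fix, he'bad⟩ := packEXC g u hcard hfix (c := y) (t := a) (Ne.symm hya)
    have hee' : e' ≠ e := by rintro rfl; exact he'bad hga
    have he'b : g e' b = y := packCL g u hcard hfix (c := y) (t := b) (Ne.symm hyb)
      (hfix e a y hga) (by rw [hgb]; exact hxy) he'fix hee'
    have he'i0 : e' ≠ i0 := by rintro rfl; rw [hb] at he'b; exact hyb he'b.symm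
    exact ⟨e', he'i0, he'b, he'bad⟩
  -- build the infinite chain
  obtain ⟨sq, hsqP, hsqX⟩ :
      ∃ sq : ℕ → I × K × K,
        (∀ m, (sq m).1 ≠ i0 ∧ g (sq m).1 b = (sq m).2.1 ∧ g (sq m).1 a = (sq m).2.2 ∧
          (sq m).2.1 ≠ (sq m).2.2) ∧
        (∀ m, (sq (m+1)).2.1 = (sq m).2.2) := by
    let P : I × K × K → Prop := fun p => p.1 ≠ i0 ∧ g p.1 b = p.2.1 ∧ g p.1 a = p.2.2 ∧
      p.2.1 ≠ p.2.2
    have h0 : P (i, g i b, g i a) := ⟨hi, rfl, rfl, fun h => hne h.symm⟩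
    have hstep' : ∀ p : {p // P p}, ∃ e', e' ≠ i0 ∧ g e' b = p.1.2.2 ∧ g e' a ≠ p.1.2.2 :=
      fun p => hstep p.1.1 p.1.2.1 p.1.2.2 p.2.1 p.2.2.1 p.2.2.2.1 p.2.2.2.2
    let stepf : {p // P p} → {p // P p} := fun p =>
      ⟨((hstep' p).choose, p.1.2.2, g (hstep' p).choose a),
        ⟨(hstep' p).choose_spec.1, (hstep' p).choose_spec.2.1, rfl,
          Ne.symm (hstep' p).choose_spec.2.2⟩⟩
    refine ⟨fun m => (stepf^[m] ⟨(i, g i b, g i a), h0⟩).1,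
      fun m => (stepf^[m] ⟨(i, g i b, g i a), h0⟩).2, fun m => ?_⟩
    show ((stepf^[m+1] ⟨(i, g i b, g i a), h0⟩ : {p // P p}) : I × K × K).2.1 =
      ((stepf^[m] ⟨(i, g i b, g i a), h0⟩ : {p // P p}) : I × K × K).2.2
    rw [Function.iterate_succ_apply']
  have hYa : ∀ m, g (sq m).1 a = (sq m).2.2 := fun m => (hsqP m).2.2.1
  have hYb : ∀ m, g (sq (m+1)).1 b = (sq m).2.2 := by
    intro m
    have h := (hsqP (m+1)).2.1
    rw [hsqX m] at h
    exact h
  have hYne : ∀ m, (sq m).2.2 ≠ (sq (m+1)).2.2 := by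
    intro m
    have h := (hsqP (m+1)).2.2.2
    rw [hsqX m] at h
    exact h
  have hdown : ∀ r r', (sq (r+1)).2.2 = (sq (r'+1)).2.2 → (sq r).2.2 = (sq r').2.2 := by
    intro r r' h
    have hfix1 : g (sq (r+1)).1 ((sq (r+1)).2.2) = (sq (r+1)).2.2 := hfix _ a _ (hYa (r+1))
    have hfix2 : g (sq (r'+1)).1 ((sq (r+1)).2.2) = (sq (r+1)).2.2 := by
      rw [h]; exact hfix _ a _ (hYa (r'+1))
    obtain ⟨hya, hyb, -, -⟩ := hE (sq (r+1)).1 (sq (r+1)).2.1 (sq (r+1)).2.2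
      (hsqP (r+1)).1 (hsqP (r+1)).2.1 (hYa (r+1)) (hsqP (r+1)).2.2.2
    have hbad1 : g (sq (r+1)).1 b ≠ (sq (r+1)).2.2 := by
      rw [hYb r]; exact hYne r
    have hbad2 : g (sq (r'+1)).1 b ≠ (sq (r+1)).2.2 := by
      rw [hYb r', h]
      exact hYne r'
    by_cases hee : (sq (r+1)).1 = (sq (r'+1)).1
    · rw [← hYb r, ← hYb r', hee]
    · exfalso
      exact hbad2 (packCL g u hcard hfix (Ne.symm hyb) hfix1 hbad1 hfix2
        (fun hh => hee hh.symm))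
  have hdownN : ∀ t r r', (sq (r+t)).2.2 = (sq (r'+t)).2.2 → (sq r).2.2 = (sq r').2.2 := by
    intro t
    induction t with
    | zero => intro r r' h; exact h
    | succ t ih => intro r r' h; exact ih r r' (hdown (r+t) (r'+t) h)
  obtain ⟨m1, m2, hm, hfeq⟩ := Fintype.exists_ne_map_eq_of_card_lt
      (fun m : Fin (Fintype.card K + 1) => (sq m.1).2.2) (by rw [Fintype.card_fin]; omega)
  obtain ⟨p, q, hpq, hpqe⟩ : ∃ p q : ℕ, p < q ∧ (sq p).2.2 = (sq q).2.2 := by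
    have hne12 : m1.1 ≠ m2.1 := fun hh => hm (Fin.val_injective hh)
    rcases Nat.lt_or_ge m1.1 m2.1 with hlt | hge
    · exact ⟨m1.1, m2.1, hlt, hfeq⟩
    · exact ⟨m2.1, m1.1, by omega, hfeq.symm⟩
  have hex : ∃ s, 0 < s ∧ (sq s).2.2 = (sq 0).2.2 := by
    refine ⟨q - p, by omega, hdownN p (q-p) 0 ?_⟩
    rw [show q - p + p = q from by omega, Nat.zero_add]
    exact hpqe.symm
  obtain ⟨hs0pos, hs0eq⟩ := Nat.find_spec hex
  set s0 := Nat.find hex with hs0def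
  have hnoq : ∀ r t, 0 < t → t < s0 → (sq (r+t)).2.2 ≠ (sq r).2.2 := by
    intro r t ht1 ht2 hcon
    have h0 : (sq t).2.2 = (sq 0).2.2 := by
      apply hdownN r t 0
      rw [Nat.zero_add, Nat.add_comm t r]
      exact hcon
    exact Nat.find_min hex ht2 ⟨ht1, h0⟩
  have hs02 : 2 ≤ s0 := by
    by_contra hcon
    have h1 : s0 = 1 := by omega
    rw [h1] at hs0eq
    exact (hYne 0) hs0eq.symm
  have hQ : ∀ t m, t + 2 ≤ s0 → g (sq (m+1)).1 ((sq (m+(t+1))).2.2) = (sq (m+1)).2.2 := by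
    intro t
    induction t with
    | zero => intro m _; exact hfix _ a _ (hYa (m+1))
    | succ t ih =>
      intro m hts
      have iht := ih (m+1) (by omega)
      rw [show m + (t+1+1) = (m+1)+(t+1) from by omega]
      have hct : (sq ((m+1)+(t+1))).2.2 ≠ (sq (m+1)).2.2 := hnoq (m+1) (t+1) (by omega) (by omega)
      have hexcfix : g (sq (m+2)).1 ((sq (m+1)).2.2) = (sq (m+1)).2.2 := hfix _ b _ (hYb (m+1))
      have hexcbad : g (sq (m+2)).1 ((sq ((m+1)+(t+1))).2.2) ≠ (sq (m+1)).2.2 := by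
        rw [iht]
        exact Ne.symm (hYne (m+1))
      have hifix : g (sq (m+1)).1 ((sq (m+1)).2.2) = (sq (m+1)).2.2 := hfix _ a _ (hYa (m+1))
      have hEne : (sq (m+1)).1 ≠ (sq (m+2)).1 := by
        intro hh
        apply hYne (m+1)
        rw [← hYa (m+1), ← hYa (m+2), hh]
      exact packCL g u hcard hfix hct hexcfix hexcbad hifix hEne
  have hfin1 : g (sq 2).1 ((sq 0).2.2) = (sq 2).2.2 := by
    have h := hQ (s0 - 2) 1 (by omega)
    rw [show 1 + (s0 - 2 + 1) = s0 from by omega, hs0eq] at h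
    exact h
  have hfin2 : g (sq 2).1 ((sq 0).2.2) = (sq 1).2.2 := by
    have hefix : g (sq 1).1 ((sq 1).2.2) = (sq 1).2.2 := hfix _ a _ (hYa 1)
    have hebad : g (sq 1).1 ((sq 0).2.2) ≠ (sq 1).2.2 := by
      rw [hfix _ b _ (hYb 0)]
      exact hYne 0
    have hifix2 : g (sq 2).1 ((sq 1).2.2) = (sq 1).2.2 := hfix _ b _ (hYb 1)
    have hEne : (sq 2).1 ≠ (sq 1).1 := by
      intro hh
      apply hYne 1
      rw [← hYa 1, ← hYa 2, hh]
    exact packCL g u hcard hfix (hYne 0) hefix hebad hifix2 hEne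
  rw [hfin1] at hfin2
  exact hYne 1 hfin2.symm

end Package


lemma sum_add_unitVec {m : ℕ} (u : Fin m → ℕ) (j : Fin m) :
    (∑ k, (u + unitVec j) k) = (∑ k, u k) + 1 := by
  simp only [Pi.add_apply, Finset.sum_add_distrib]
  congr 1
  simp [unitVec]

theorem statement12 {n d : ℕ}
    (T : (Fin (d + 2) → ℕ) → Fin (n + 2) → Fin (d + 2))
    (hpos : ∀ v : Fin (d + 2) → ℕ, (∑ j, v j) = n + 2 → topePos (T v) = v)
    (hsector : ∀ (u : Fin (d + 2) → ℕ) (j j' : Fin (d + 2)), (∑ k, u k) + 1 = n + 2 →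
      ∀ i, T (u + unitVec j') i = j → T (u + unitVec j) i = j) :
    (∀ j0 : Fin (d + 2), ∃ T' : (Fin (d + 1) → ℕ) → Fin (n + 2) → Fin (d + 1),
      (∀ v' : Fin (d + 1) → ℕ, (∑ j, v' j) = n + 2 → topePos (T' v') = v') ∧
      (∀ (u' : Fin (d + 1) → ℕ) (j j' : Fin (d + 1)), (∑ k, u' k) + 1 = n + 2 →
        ∀ i, T' (u' + unitVec j') i = j → T' (u' + unitVec j) i = j) ∧
      (∀ v : Fin (d + 2) → ℕ, (∑ j, v j) = n + 2 → v j0 = 0 →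
        ∀ i, j0.succAbove (T' (v ∘ j0.succAbove) i) = T v i)) ∧
    (∀ i0 : Fin (n + 2),
      (∀ v' : Fin (d + 2) → ℕ, (∑ j, v' j) = n + 1 →
        ∃ v : Fin (d + 2) → ℕ, ((∑ j, v j) = n + 2) ∧
          topePos (T v ∘ i0.succAbove) = v') ∧
      (∀ v w : Fin (d + 2) → ℕ, (∑ j, v j) = n + 2 → (∑ j, w j) = n + 2 →
        topePos (T v ∘ i0.succAbove) = topePos (T w ∘ i0.succAbove) →
        T v ∘ i0.succAbove = T w ∘ i0.succAbove) ∧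
      (∃ T'' : (Fin (d + 2) → ℕ) → Fin (n + 1) → Fin (d + 2),
        (∀ v' : Fin (d + 2) → ℕ, (∑ j, v' j) = n + 1 → topePos (T'' v') = v') ∧
        (∀ (u : Fin (d + 2) → ℕ) (j j' : Fin (d + 2)), (∑ k, u k) + 1 = n + 1 →
          ∀ i, T'' (u + unitVec j') i = j → T'' (u + unitVec j) i = j) ∧
        (∀ v : Fin (d + 2) → ℕ, (∑ j, v j) = n + 2 →
          T'' (topePos (T v ∘ i0.succAbove)) = T v ∘ i0.succAbove))) := by
  constructor
  · -- Part (i): contraction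
    intro j0
    set ev : (Fin (d + 1) → ℕ) → (Fin (d + 2) → ℕ) :=
      fun v' j => ((finSuccEquiv' j0) j).elim 0 v' with hevdef
    have hev1 : ∀ (v' : Fin (d + 1) → ℕ) (k : Fin (d + 1)),
        ev v' (j0.succAbove k) = v' k := by
      intro v' k
      simp [hevdef, finSuccEquiv'_succAbove]
    have hev0 : ∀ v' : Fin (d + 1) → ℕ, ev v' j0 = 0 := by
      intro v'
      simp [hevdef, finSuccEquiv'_at]
    have hsum_ev : ∀ v' : Fin (d + 1) → ℕ, (∑ j, ev v' j) = ∑ k, v' k := by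
      intro v'
      rw [Fin.sum_univ_succAbove (fun j => ev v' j) j0, hev0]
      simp [hev1]
    have hev_add : ∀ (v' : Fin (d + 1) → ℕ) (c : Fin (d + 1)),
        ev (v' + unitVec c) = ev v' + unitVec (j0.succAbove c) := by
      intro v' c
      funext j
      by_cases hj : j = j0
      · rw [hj]
        simp only [Pi.add_apply, hev0, unitVec]
        rw [if_neg (Fin.ne_succAbove j0 c)]
      · obtain ⟨k, hk⟩ := Fin.exists_succAbove_eq hj
        rw [← hk]
        simp only [Pi.add_apply, hev1, unitVec]
        congr 1
        by_cases hkc : k = c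
        · subst hkc; rw [if_pos rfl, if_pos rfl]
        · rw [if_neg hkc, if_neg (fun hh => hkc (Fin.succAbove_right_injective hh))]
    have hno : ∀ v : Fin (d + 2) → ℕ, (∑ k, v k) = n + 2 → v j0 = 0 →
        ∀ i1, T v i1 ≠ j0 := by
      intro v hv hvj0 i1 hcon
      have h := congrFun (hpos v hv) j0
      rw [hvj0] at h
      simp only [topePos] at h
      rw [Finset.card_eq_zero] at h
      have hmem : i1 ∈ Finset.univ.filter fun i2 => T v i2 = j0 :=
        Finset.mem_filter.mpr ⟨Finset.mem_univ _, hcon⟩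
      rw [h] at hmem
      exact absurd hmem (Finset.notMem_empty _)
    set T' : (Fin (d + 1) → ℕ) → Fin (n + 2) → Fin (d + 1) := fun v' i1 =>
      if h : T (ev v') i1 = j0 then ⟨0, Nat.succ_pos d⟩
      else (Fin.exists_succAbove_eq h).choose with hT'def
    have hT'spec : ∀ v' i1, T (ev v') i1 ≠ j0 →
        j0.succAbove (T' v' i1) = T (ev v') i1 := by
      intro v' i1 h
      simp only [hT'def, dif_neg h]
      exact (Fin.exists_succAbove_eq h).choose_spec
    refine ⟨T', ?_, ?_, ?_⟩
    · -- positions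
      intro v' hv
      funext k
      have hfe : (Finset.univ.filter fun i1 => T' v' i1 = k) =
          (Finset.univ.filter fun i1 => T (ev v') i1 = j0.succAbove k) := by
        ext i1
        simp only [Finset.mem_filter, Finset.mem_univ, true_and]
        constructor
        · intro h
          rw [← hT'spec v' i1 (hno (ev v') (by rw [hsum_ev]; exact hv) (hev0 v') i1), h]
        · intro h
          apply Fin.succAbove_right_injective (p := j0)
          rw [hT'spec v' i1 (hno (ev v') (by rw [hsum_ev]; exact hv) (hev0 v') i1), h]
      simp only [topePos]
      rw [hfe]
      have h2 := congrFun (hpos (ev v') (by rw [hsum_ev]; exact hv)) (j0.succAbove k)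
      rw [hev1] at h2
      simpa [topePos] using h2
    · -- sector
      intro u' j j' hsum i1 hI
      have hs1 : (∑ k, ev (u' + unitVec j') k) = n + 2 := by
        rw [hsum_ev, sum_add_unitVec]; omega
      have hs2 : (∑ k, ev (u' + unitVec j) k) = n + 2 := by
        rw [hsum_ev, sum_add_unitVec]; omega
      have h1 := hno _ hs1 (hev0 _) i1
      have h2 := hT'spec _ i1 h1
      rw [hI, hev_add] at h2
      have h3 := hsector (ev u') (j0.succAbove j) (j0.succAbove j')
        (by rw [hsum_ev]; omega) i1 h2.symm
      have h4 := hno _ hs2 (hev0 _) i1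
      apply Fin.succAbove_right_injective (p := j0)
      rw [hT'spec _ i1 h4, hev_add]
      exact h3
    · -- compatibility
      intro v hv hvj0 i1
      have hveq : ev (v ∘ j0.succAbove) = v := by
        funext j
        by_cases hj : j = j0
        · subst hj; rw [hev0, hvj0]
        · obtain ⟨k, hk⟩ := Fin.exists_succAbove_eq hj
          rw [← hk, hev1]
          rfl
      have hTne : T (ev (v ∘ j0.succAbove)) i1 ≠ j0 := by
        rw [hveq]; exact hno v hv hvj0 i1
      have h := hT'spec (v ∘ j0.succAbove) i1 hTne
      rw [hveq] at h
      exact h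
  · -- Part (ii): deletion
    intro i0
    have hrpos : ∀ v : Fin (d + 2) → ℕ, (∑ j, v j) = n + 2 → ∀ k,
        topePos (T v ∘ i0.succAbove) k + (if k = T v i0 then 1 else 0) = v k := by
      intro v hv k
      have h := congrFun (hpos v hv) k
      simp only [topePos, Finset.card_filter] at h ⊢
      rw [Fin.sum_univ_succAbove (fun i => if T v i = k then 1 else 0) i0] at h
      simp only [Function.comp_apply]
      have hite : (if k = T v i0 then 1 else 0) = (if T v i0 = k then (1:ℕ) else 0) := by
        by_cases hh : T v i0 = k
        · rw [if_pos hh, if_pos hh.symm]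
        · rw [if_neg hh, if_neg (fun he => hh he.symm)]
      rw [hite]
      omega
    have hrpos' : ∀ (v' : Fin (d + 2) → ℕ) (c : Fin (d + 2)),
        (∑ k, v' k) + 1 = n + 2 → T (v' + unitVec c) i0 = c →
        topePos (T (v' + unitVec c) ∘ i0.succAbove) = v' := by
      intro v' c hs hfc
      funext k
      have h := hrpos (v' + unitVec c) (by rw [sum_add_unitVec]; omega) k
      rw [hfc] at h
      simp only [Pi.add_apply, unitVec] at h
      by_cases hk : k = c
      · rw [if_pos hk] at h; omega
      · rw [if_neg hk] at h; omega
    have huniq : ∀ v w : Fin (d + 2) → ℕ, (∑ j, v j) = n + 2 → (∑ j, w j) = n + 2 →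
        topePos (T v ∘ i0.succAbove) = topePos (T w ∘ i0.succAbove) →
        T v ∘ i0.succAbove = T w ∘ i0.succAbove := by
      intro v w hv hw hP
      have hveq : v = topePos (T v ∘ i0.succAbove) + unitVec (T v i0) := by
        funext k
        have h := hrpos v hv k
        simp only [Pi.add_apply, unitVec]
        omega
      have hweq : w = topePos (T v ∘ i0.succAbove) + unitVec (T w i0) := by
        funext k
        have h := hrpos w hw k
        rw [← hP] at h
        simp only [Pi.add_apply, unitVec]
        omega
      by_cases hc : T v i0 = T w i0
      · rw [hveq, hweq, hc]
      · have hsumP : (∑ k, topePos (T v ∘ i0.succAbove) k) + 1 = n + 2 := by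
          have h2 := sum_add_unitVec (topePos (T v ∘ i0.succAbove)) (T v i0)
          rw [← hveq] at h2
          omega
        have hcard : ∀ t k : Fin (d + 2),
            (Finset.univ.filter fun i1 =>
              T (topePos (T v ∘ i0.succAbove) + unitVec t) i1 = k).card =
            topePos (T v ∘ i0.succAbove) k + if k = t then 1 else 0 := by
          intro t k
          have h3 := congrFun (hpos (topePos (T v ∘ i0.succAbove) + unitVec t)
            (by rw [sum_add_unitVec]; omega)) k
          simp only [topePos, Pi.add_apply, unitVec] at h3 ⊢
          exact h3
        have hfix : ∀ (i1 : Fin (n + 2)) (t k : Fin (d + 2)),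
            T (topePos (T v ∘ i0.succAbove) + unitVec t) i1 = k →
            T (topePos (T v ∘ i0.succAbove) + unitVec k) i1 = k :=
          fun i1 t k h4 => hsector _ k t hsumP i1 h4
        have ha : T (topePos (T v ∘ i0.succAbove) + unitVec (T v i0)) i0 = T v i0 := by
          rw [← hveq]
        have hb : T (topePos (T v ∘ i0.succAbove) + unitVec (T w i0)) i0 = T w i0 := by
          rw [← hweq]
        funext l
        have h5 := packML (fun (i1 : Fin (n + 2)) (c : Fin (d + 2)) =>
            T (topePos (T v ∘ i0.succAbove) + unitVec c) i1)
          (topePos (T v ∘ i0.succAbove)) hcard hfix hc ha hb (Fin.succAbove_ne i0 l)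
        have h6 := congrFun (congrArg T hveq) (i0.succAbove l)
        have h7 := congrFun (congrArg T hweq) (i0.succAbove l)
        simp only [Function.comp_apply]
        rw [h6, h7]
        exact h5
    have hrep : ∀ v' : Fin (d + 2) → ℕ, (∑ k, v' k) + 1 = n + 2 →
        T (v' + unitVec (T (v' + unitVec 0) i0)) i0 = T (v' + unitVec 0) i0 :=
      fun v' h => hsector v' _ 0 h i0 rfl
    refine ⟨?_, huniq, ?_⟩
    · -- existence of lifts
      intro v' hv'
      refine ⟨v' + unitVec (T (v' + unitVec 0) i0), by rw [sum_add_unitVec]; omega, ?_⟩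
      exact hrpos' v' (T (v' + unitVec 0) i0) (by omega) (hrep v' (by omega))
    · -- the restricted pre-trianguloid
      refine ⟨fun v' => T (v' + unitVec (T (v' + unitVec 0) i0)) ∘ i0.succAbove,
        ?_, ?_, ?_⟩
      · -- positions
        intro v' hv'
        exact hrpos' v' _ (by omega) (hrep v' (by omega))
      · -- sector
        intro u j j' hsum i1 hTj
        by_cases hjj : j = j'
        · subst hjj; exact hTj
        · set c := T (u + unitVec j + unitVec j') i0 with hcdef
          have hsum1 : (∑ k, (u + unitVec j') k) + 1 = n + 2 := by
            rw [sum_add_unitVec]; omega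
          have hsum2 : (∑ k, (u + unitVec j) k) + 1 = n + 2 := by
            rw [sum_add_unitVec]; omega
          have hcomm : u + unitVec j + unitVec j' = u + unitVec j' + unitVec j :=
            add_right_comm u (unitVec j) (unitVec j')
          have hcj' : T (u + unitVec j' + unitVec c) i0 = c := by
            apply hsector (u + unitVec j') c j hsum1 i0
            rw [← hcomm]
          have hcj : T (u + unitVec j + unitVec c) i0 = c := by
            apply hsector (u + unitVec j) c j' hsum2 i0
            exact hcdef.symm
          have hsc1 : (∑ k, (u + unitVec j' + unitVec c) k) = n + 2 := by
            rw [sum_add_unitVec, sum_add_unitVec]; omega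
          have hsc2 : (∑ k, (u + unitVec j + unitVec c) k) = n + 2 := by
            rw [sum_add_unitVec, sum_add_unitVec]; omega
          have hU : T (u + unitVec j' + unitVec c) ∘ i0.succAbove =
              T ((u + unitVec j') + unitVec (T ((u + unitVec j') + unitVec 0) i0)) ∘
                i0.succAbove := by
            apply huniq _ _ hsc1 (by rw [sum_add_unitVec, sum_add_unitVec]; omega)
            rw [hrpos' (u + unitVec j') c hsum1 hcj',
              hrpos' (u + unitVec j') _ hsum1 (hrep _ hsum1)]
          have hY : T (u + unitVec j + unitVec c) ∘ i0.succAbove =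
              T ((u + unitVec j) + unitVec (T ((u + unitVec j) + unitVec 0) i0)) ∘
                i0.succAbove := by
            apply huniq _ _ hsc2 (by rw [sum_add_unitVec, sum_add_unitVec]; omega)
            rw [hrpos' (u + unitVec j) c hsum2 hcj,
              hrpos' (u + unitVec j) _ hsum2 (hrep _ hsum2)]
          have hUi : T (u + unitVec j' + unitVec c) (i0.succAbove i1) = j := by
            have h8 := congrFun hU i1
            simp only [Function.comp_apply] at h8 hTj
            rw [h8]
            exact hTj
          have hsumc : (∑ k, (u + unitVec c) k) + 1 = n + 2 := by
            rw [sum_add_unitVec]; omega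
          have hst := hsector (u + unitVec c) j j' hsumc (i0.succAbove i1)
            (by rw [show u + unitVec c + unitVec j' = u + unitVec j' + unitVec c from
                add_right_comm u (unitVec c) (unitVec j')]
                exact hUi)
          have hYi : T (u + unitVec j + unitVec c) (i0.succAbove i1) = j := by
            rw [show u + unitVec j + unitVec c = u + unitVec c + unitVec j from
              add_right_comm u (unitVec j) (unitVec c)]
            exact hst
          have h9 := congrFun hY i1
          simp only [Function.comp_apply] at h9 ⊢
          rw [← h9]
          exact hYi
      · -- compatibility
        intro v hv
        have hPs : (∑ k, topePos (T v ∘ i0.succAbove) k) + 1 = n + 2 := by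
          have h2 : (∑ k, (topePos (T v ∘ i0.succAbove) k +
              (if k = T v i0 then 1 else 0))) = n + 2 := by
            rw [Finset.sum_congr rfl (fun k _ => hrpos v hv k)]
            exact hv
          rw [Finset.sum_add_distrib] at h2
          have h3 : (∑ k : Fin (d + 2), (if k = T v i0 then (1:ℕ) else 0)) = 1 := by
            simp
          omega
        apply huniq _ v (by rw [sum_add_unitVec]; omega) hv
        rw [hrpos' _ _ hPs (hrep _ hPs)]
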